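/- arXiv:1902.02314 — 3 statements merged into one kernel-verified Lean document; each statement's English description precedes it below -/
import Mathlib

section
/- Let v be the vector field on ℝ² minus the closed negative real half-axis (including the origin) given in polar coordinates by v(ρcosθ, ρsinθ) = (ρ−1)(cosθ, sinθ) + ρθ(−sinθ, cosθ), i.e., identifying ℝ² with ℂ, v(z) = (1 − 1/|z|)·z + (arg z)·(iz). Then v is continuously differentiable on its domain and its divergence at the point z = (ρcosθ, ρsinθ) equals 3 − 1/ρ. -/
open Real

noncomputable section

def divg (A : ℂ → ℂ) (z : ℂ) : ℝ := (fderiv ℝ A z 1).re + (fderiv ℝ A z Complex.I).im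

def vField (z : ℂ) : ℂ :=
  ((1 - ‖z‖⁻¹ : ℝ) : ℂ) * z + ((Complex.arg z : ℝ) : ℂ) * (Complex.I * z)

lemma exp_neg_log_re {z : ℂ} (hz : z ≠ 0) :
    Real.exp (-(Complex.log z).re) = ‖z‖⁻¹ := by
  rw [Complex.log_re, Real.exp_neg, Real.exp_log (norm_pos_iff.mpr hz)]

lemma vField_eq {z : ℂ} (hz : z ∈ Complex.slitPlane) :
    vField z = z - Real.exp (-(Complex.log z).re) • z
      + (Complex.log z).im • (Complex.I * z) := by
  have hz0 : z ≠ 0 := Complex.slitPlane_ne_zero hz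
  rw [exp_neg_log_re hz0, Complex.log_im, vField, Complex.real_smul, Complex.real_smul]
  push_cast
  ring

lemma divg_vField {z : ℂ} (hz : z ∈ Complex.slitPlane) :
    divg vField z = 3 - ‖z‖⁻¹ := by
  have hz0 : z ≠ 0 := Complex.slitPlane_ne_zero hz
  have hlog : HasFDerivAt Complex.log
      (((1 : ℂ →L[ℂ] ℂ).smulRight z⁻¹).restrictScalars ℝ) z :=
    ((Complex.hasDerivAt_log hz).hasFDerivAt).restrictScalars ℝ
  set L := ((1 : ℂ →L[ℂ] ℂ).smulRight z⁻¹).restrictScalars ℝ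
  have hre : HasFDerivAt (fun w => (Complex.log w).re) (Complex.reCLM.comp L) z :=
    Complex.reCLM.hasFDerivAt.comp z hlog
  have him : HasFDerivAt (fun w => (Complex.log w).im) (Complex.imCLM.comp L) z :=
    Complex.imCLM.hasFDerivAt.comp z hlog
  have hexp : HasFDerivAt (fun w => Real.exp (-(Complex.log w).re))
      (Real.exp (-(Complex.log z).re) • (-(Complex.reCLM.comp L))) z :=
    HasFDerivAt.exp hre.neg
  have hA : HasFDerivAt (fun w => Real.exp (-(Complex.log w).re) • w)
      (Real.exp (-(Complex.log z).re) • ContinuousLinearMap.id ℝ ℂ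
        + (Real.exp (-(Complex.log z).re) • (-(Complex.reCLM.comp L))).smulRight z) z :=
    hexp.smul (hasFDerivAt_id z)
  have hmul : HasFDerivAt (fun w => Complex.I * w)
      (ContinuousLinearMap.mul ℝ ℂ Complex.I) z :=
    (ContinuousLinearMap.mul ℝ ℂ Complex.I).hasFDerivAt
  have hB : HasFDerivAt (fun w => (Complex.log w).im • (Complex.I * w))
      ((Complex.log z).im • ContinuousLinearMap.mul ℝ ℂ Complex.I
        + (Complex.imCLM.comp L).smulRight (Complex.I * z)) z :=
    him.smul hmul
  have hv' : HasFDerivAt (fun w => w - Real.exp (-(Complex.log w).re) • w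
      + (Complex.log w).im • (Complex.I * w))
      (ContinuousLinearMap.id ℝ ℂ
        - (Real.exp (-(Complex.log z).re) • ContinuousLinearMap.id ℝ ℂ
          + (Real.exp (-(Complex.log z).re) • (-(Complex.reCLM.comp L))).smulRight z)
        + ((Complex.log z).im • ContinuousLinearMap.mul ℝ ℂ Complex.I
          + (Complex.imCLM.comp L).smulRight (Complex.I * z))) z :=
    ((hasFDerivAt_id z).sub hA).add hB
  have heq : vField =ᶠ[nhds z] (fun w => w - Real.exp (-(Complex.log w).re) • w
      + (Complex.log w).im • (Complex.I * w)) := by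
    filter_upwards [Complex.isOpen_slitPlane.eventually_mem hz] with w hw
    exact vField_eq hw
  have hv := hv'.congr_of_eventuallyEq heq
  rw [divg, hv.fderiv]
  have hn : Complex.normSq z ≠ 0 := (Complex.normSq_pos.2 hz0).ne'
  have hL1 : L 1 = z⁻¹ := by simp [L]
  have hLI : L Complex.I = Complex.I * z⁻¹ := by simp [L, smul_eq_mul]
  rw [exp_neg_log_re hz0]
  simp only [ContinuousLinearMap.add_apply, ContinuousLinearMap.sub_apply,
    ContinuousLinearMap.smul_apply, ContinuousLinearMap.coe_smul', Pi.smul_apply,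
    ContinuousLinearMap.id_apply, ContinuousLinearMap.smulRight_apply,
    ContinuousLinearMap.neg_apply, ContinuousLinearMap.coe_comp', Function.comp_apply,
    ContinuousLinearMap.coe_restrictScalars', ContinuousLinearMap.one_apply,
    ContinuousLinearMap.mul_apply', Complex.reCLM_apply, Complex.imCLM_apply,
    one_mul, Complex.add_re, Complex.sub_re, Complex.add_im, Complex.sub_im,
    Complex.smul_re, Complex.smul_im, Complex.one_re, Complex.one_im,
    Complex.mul_re, Complex.mul_im, Complex.I_re, Complex.I_im,
    Complex.inv_re, Complex.inv_im, hL1, hLI]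
  have habs : ‖z‖ ^ 2 = Complex.normSq z := Complex.sq_norm z
  have habs0 : ‖z‖ ≠ 0 := norm_ne_zero_iff.mpr hz0
  simp only [smul_eq_mul]
  field_simp
  have h1 : Complex.normSq z = z.re*z.re + z.im*z.im := Complex.normSq_apply z
  linear_combination (-(1 + ‖z‖)) * h1

/-- Lemma 2.2 (b): `v` is continuously differentiable on `ℂ` minus the closed negative
real half-axis (Mathlib's `Complex.slitPlane`), and
`div v(ρ cos θ, ρ sin θ) = 3 - 1/ρ`. -/
theorem vField_contDiff_and_div :
    ContDiffOn ℝ 1 vField Complex.slitPlane ∧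
    ∀ ρ θ : ℝ, 0 < ρ → θ ∈ Set.Ioo (-π) π →
      divg vField ((ρ : ℂ) * Complex.exp (θ * Complex.I)) = 3 - 1 / ρ := by
  constructor
  · intro z hz
    have hlog : ContDiffAt ℝ 1 Complex.log z :=
      (Complex.contDiffAt_log hz).restrict_scalars ℝ
    have key : ContDiffAt ℝ 1 (fun w => w - Real.exp (-(Complex.log w).re) • w
        + (Complex.log w).im • (Complex.I * w)) z := by
      have hre : ContDiffAt ℝ 1 (fun w => (Complex.log w).re) z :=
        Complex.reCLM.contDiff.contDiffAt.comp z hlog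
      have him : ContDiffAt ℝ 1 (fun w => (Complex.log w).im) z :=
        Complex.imCLM.contDiff.contDiffAt.comp z hlog
      exact (contDiffAt_id.sub
        (((Real.contDiff_exp.contDiffAt).comp z hre.neg).smul contDiffAt_id)).add
        (him.smul (contDiffAt_const.mul contDiffAt_id))
    have heq : vField =ᶠ[nhds z] (fun w => w - Real.exp (-(Complex.log w).re) • w
        + (Complex.log w).im • (Complex.I * w)) := by
      filter_upwards [Complex.isOpen_slitPlane.eventually_mem hz] with w hw
      exact vField_eq hw
    exact (key.congr_of_eventuallyEq heq).contDiffWithinAt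
  · intro ρ θ hρ hθ
    have harg : Complex.arg ((ρ : ℂ) * Complex.exp (θ * Complex.I)) = θ := by
      rw [Complex.arg_real_mul _ hρ, Complex.exp_mul_I,
        Complex.arg_cos_add_sin_mul_I ⟨hθ.1, le_of_lt hθ.2⟩]
    have hne : ((ρ : ℂ) * Complex.exp (θ * Complex.I)) ≠ 0 := by
      apply mul_ne_zero
      · exact_mod_cast hρ.ne'
      · exact Complex.exp_ne_zero _
    have hmem : ((ρ : ℂ) * Complex.exp (θ * Complex.I)) ∈ Complex.slitPlane := by
      rw [Complex.mem_slitPlane_iff_arg, harg]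
      exact ⟨fun h => (lt_irrefl π (h ▸ hθ.2)), hne⟩
    have habs : ‖(ρ : ℂ) * Complex.exp (θ * Complex.I)‖ = ρ := by
      rw [norm_mul, Complex.norm_exp_ofReal_mul_I, mul_one, Complex.norm_of_nonneg hρ.le]
    rw [divg_vField hmem, habs, one_div]
end
end

section
/- Let v be the vector field on ℝ² minus the closed negative real half-axis (including the origin) given by v(z) = (1 − 1/|z|)·z + (arg z)·(iz), identifying ℝ² with ℂ. Then for every point z = (ρcosθ, ρsinθ) in the domain and every ξ = (ξ₁, ξ₂) ∈ ℝ², the derivative of v satisfies dv(z)[ξ]·ξ = ξ_N² + (2 − 1/ρ)·ξ_T², where ξ_N = ξ₁cosθ + ξ₂sinθ and ξ_T = −ξ₁sinθ + ξ₂cosθ. -/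
open Real

noncomputable section

/-- The Euclidean inner product on `ℝ² ≅ ℂ`. -/
def rdot (z w : ℂ) : ℝ := z.re * w.re + z.im * w.im

def gField (z : ℂ) : ℂ :=
  z - Real.exp (-(Complex.log z).re) • z + (Complex.log z).im • (Complex.I • z)

lemma vField_eq_gField {z : ℂ} (hz : z ∈ Complex.slitPlane) : vField z = gField z := by
  have hz0 : z ≠ 0 := Complex.slitPlane_ne_zero hz
  have h1 : Real.exp (-(Complex.log z).re) = ‖z‖⁻¹ := by
    rw [Complex.log_re, Real.exp_neg, Real.exp_log (norm_pos_iff.mpr hz0)]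
  rw [vField, gField, h1, Complex.log_im, smul_eq_mul]
  push_cast
  ring_nf
  rw [Complex.real_smul, Complex.real_smul]
  push_cast
  ring

lemma gField_hasFDeriv {z₀ : ℂ} (hz : z₀ ∈ Complex.slitPlane) :
    HasFDerivAt gField
      (ContinuousLinearMap.id ℝ ℂ -
        (Real.exp (-(Complex.log z₀).re) • ContinuousLinearMap.id ℝ ℂ +
          (Real.exp (-(Complex.log z₀).re) •
            -(Complex.reCLM.comp (z₀⁻¹ • (1 : ℂ →L[ℝ] ℂ)))).smulRight z₀) +
        ((Complex.log z₀).im • (Complex.I • ContinuousLinearMap.id ℝ ℂ) +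
          (Complex.imCLM.comp (z₀⁻¹ • (1 : ℂ →L[ℝ] ℂ))).smulRight (Complex.I • z₀))) z₀ := by
  have hlog := (Complex.hasStrictFDerivAt_log_real hz).hasFDerivAt
  have hre : HasFDerivAt (fun z => (Complex.log z).re)
      (Complex.reCLM.comp (z₀⁻¹ • (1 : ℂ →L[ℝ] ℂ))) z₀ :=
    (Complex.reCLM.hasFDerivAt).comp z₀ hlog
  have him : HasFDerivAt (fun z => (Complex.log z).im)
      (Complex.imCLM.comp (z₀⁻¹ • (1 : ℂ →L[ℝ] ℂ))) z₀ :=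
    (Complex.imCLM.hasFDerivAt).comp z₀ hlog
  have hexpc := (hre.neg).exp
  have h1 := hexpc.smul (hasFDerivAt_id z₀)
  have hIz : HasFDerivAt (fun z : ℂ => Complex.I • z)
      (Complex.I • ContinuousLinearMap.id ℝ ℂ) z₀ :=
    (hasFDerivAt_id z₀).const_smul Complex.I
  have h2 := him.smul hIz
  exact ((hasFDerivAt_id z₀).sub h1).add h2

/-- Lemma 2.2 (c): at each point `z = ρ e^{iθ}` of the slit plane (`ρ > 0`, `|θ| < π`),
the Fréchet derivative of `v` satisfies `dv(z)[ξ]·ξ = ξ_N² + (2 - 1/ρ)·ξ_T²`, where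
`ξ_N = ξ₁ cos θ + ξ₂ sin θ` and `ξ_T = -ξ₁ sin θ + ξ₂ cos θ`. -/
theorem vField_deriv_quadratic_form (ρ θ : ℝ) (hρ : 0 < ρ) (hθ : θ ∈ Set.Ioo (-π) π)
    (ξ : ℂ) :
    rdot (fderiv ℝ vField ((ρ : ℂ) * Complex.exp (θ * Complex.I)) ξ) ξ =
      (ξ.re * Real.cos θ + ξ.im * Real.sin θ) ^ 2 +
        (2 - 1 / ρ) * (-ξ.re * Real.sin θ + ξ.im * Real.cos θ) ^ 2 := by
  set z₀ : ℂ := (ρ : ℂ) * Complex.exp (θ * Complex.I) with hz₀def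
  have he : Complex.exp ((θ:ℂ) * Complex.I) = (Real.cos θ : ℝ) + (Real.sin θ : ℝ) * Complex.I := by
    rw [Complex.exp_mul_I]; push_cast; ring
  have harg : Complex.arg z₀ = θ := by
    rw [hz₀def, Complex.arg_real_mul _ hρ, he, Complex.ofReal_cos, Complex.ofReal_sin,
      Complex.arg_cos_add_sin_mul_I ⟨hθ.1, le_of_lt hθ.2⟩]
  have hz : z₀ ∈ Complex.slitPlane := by
    rw [Complex.mem_slitPlane_iff_arg, harg]
    exact ⟨ne_of_lt hθ.2, mul_ne_zero (by exact_mod_cast hρ.ne') (Complex.exp_ne_zero _)⟩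
  -- values at z₀
  have habs : ‖z₀‖ = ρ := by
    rw [hz₀def]
    simp [Complex.norm_exp, abs_of_pos hρ]
  have hlogim : (Complex.log z₀).im = θ := by rw [Complex.log_im, harg]
  have hexpval : Real.exp (-(Complex.log z₀).re) = ρ⁻¹ := by
    rw [Complex.log_re, habs, Real.exp_neg, Real.exp_log hρ]
  have hinv : z₀⁻¹ = ((ρ⁻¹ : ℝ) : ℂ) * ((Real.cos θ : ℝ) - (Real.sin θ : ℝ) * Complex.I) := by
    rw [hz₀def, mul_inv, ← Complex.exp_neg]
    have h2 : ((-θ:ℝ):ℂ) * Complex.I = -((θ:ℂ) * Complex.I) := by push_cast; ring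
    rw [← h2, Complex.exp_mul_I, ← Complex.ofReal_cos, ← Complex.ofReal_sin,
      Real.cos_neg, Real.sin_neg]
    push_cast
    ring
  -- the derivative
  have hD := (gField_hasFDeriv hz).fderiv
  have heq : fderiv ℝ vField z₀ = fderiv ℝ gField z₀ := by
    apply Filter.EventuallyEq.fderiv_eq
    filter_upwards [Complex.isOpen_slitPlane.mem_nhds hz] with w hw
    exact vField_eq_gField hw
  rw [heq, hD]
  simp only [ContinuousLinearMap.add_apply, ContinuousLinearMap.sub_apply,
    ContinuousLinearMap.smul_apply, ContinuousLinearMap.coe_smul', Pi.smul_apply,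
    ContinuousLinearMap.smulRight_apply, ContinuousLinearMap.coe_comp', Function.comp_apply,
    ContinuousLinearMap.id_apply, ContinuousLinearMap.one_apply, Complex.reCLM_apply,
    Complex.imCLM_apply, ContinuousLinearMap.neg_apply]
  rw [hexpval, hlogim, hinv]
  have hz₀ : z₀ = ((ρ:ℝ) : ℂ) * ((Real.cos θ : ℝ) + (Real.sin θ : ℝ) * Complex.I) := by
    rw [hz₀def, he]
  rw [hz₀]
  have hρ' : ρ ≠ 0 := hρ.ne'
  simp only [rdot, Complex.add_re, Complex.add_im, Complex.sub_re, Complex.sub_im,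
    Complex.mul_re, Complex.mul_im, Complex.smul_re, Complex.smul_im, Complex.real_smul,
    Complex.ofReal_re, Complex.ofReal_im, Complex.I_re, Complex.I_im,
    Complex.neg_re, Complex.neg_im, smul_eq_mul]
  have hs : Real.sin θ ^ 2 = 1 - Real.cos θ ^ 2 := by
    nlinarith [Real.sin_sq_add_cos_sq θ]
  field_simp
  linear_combination ((ξ.re^2 + ξ.im^2) * (ρ - ρ^2)) * (Real.sin_sq_add_cos_sq θ)
end
end

section
/- Let v be the vector field on ℝ² minus the closed negative real half-axis (including the origin) given by v(z) = (1 − 1/|z|)·z + (arg z)·(iz), identifying ℝ² with ℂ. Then for every point z = (ρcosθ, ρsinθ) in the domain and every ξ = (ξ₁, ξ₂) ∈ ℝ², the Fréchet derivative of v satisfies dv(z)[ξ] = ξ_N(cosθ, sinθ) + ξ_N θ(−sinθ, cosθ) − ξ_T θ(cosθ, sinθ) + ξ_T(2 − 1/ρ)(−sinθ, cosθ), where ξ_N = ξ₁cosθ + ξ₂sinθ and ξ_T = −ξ₁sinθ + ξ₂cosθ. -/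
open Real

noncomputable section

/-- At each point `z = ρ e^{iθ}` of the slit plane (`ρ > 0`, `|θ| < π`), the Fréchet
derivative of `v` is given by
`dv(z)[ξ] = ξ_N(cos θ, sin θ) + ξ_N θ(-sin θ, cos θ) - ξ_T θ(cos θ, sin θ)
            + ξ_T(2 - 1/ρ)(-sin θ, cos θ)`,
where `ξ_N = ξ₁ cos θ + ξ₂ sin θ`, `ξ_T = -ξ₁ sin θ + ξ₂ cos θ`, and in `ℂ ≅ ℝ²` one has
`(cos θ, sin θ) = e^{iθ}` and `(-sin θ, cos θ) = i e^{iθ}`. -/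
theorem vField_deriv_formula (ρ θ : ℝ) (hρ : 0 < ρ) (hθ : θ ∈ Set.Ioo (-π) π)
    (ξ : ℂ) (ξN ξT : ℝ)
    (hN : ξN = ξ.re * Real.cos θ + ξ.im * Real.sin θ)
    (hT : ξT = -ξ.re * Real.sin θ + ξ.im * Real.cos θ) :
    fderiv ℝ vField ((ρ : ℂ) * Complex.exp (θ * Complex.I)) ξ =
      (ξN : ℂ) * Complex.exp (θ * Complex.I) +
        ((ξN * θ : ℝ) : ℂ) * (Complex.I * Complex.exp (θ * Complex.I)) -
        ((ξT * θ : ℝ) : ℂ) * Complex.exp (θ * Complex.I) +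
        ((ξT * (2 - 1 / ρ) : ℝ) : ℂ) * (Complex.I * Complex.exp (θ * Complex.I)) := by
  set e : ℂ := Complex.exp (θ * Complex.I) with he
  set z₀ : ℂ := (ρ : ℂ) * e with hz₀
  -- basic facts
  have hargz : z₀.arg = θ := by
    rw [hz₀, he, show ((θ:ℝ):ℂ) * Complex.I = (θ:ℝ) * Complex.I from rfl,
      Complex.exp_mul_I, Complex.arg_real_mul _ hρ,
      Complex.arg_cos_add_sin_mul_I ⟨hθ.1, le_of_lt hθ.2⟩]
  have hz0ne : z₀ ≠ 0 := by
    rw [hz₀]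
    exact mul_ne_zero (by exact_mod_cast hρ.ne') (Complex.exp_ne_zero _)
  have hslit : z₀ ∈ Complex.slitPlane := by
    rw [Complex.mem_slitPlane_iff_arg, hargz]
    exact ⟨hθ.2.ne, hz0ne⟩
  have habs : ‖z₀‖ = ρ := by
    rw [hz₀, norm_mul, Complex.norm_exp]
    simp [abs_of_pos hρ]
  -- eventual expression of vField
  have hev : vField =ᶠ[nhds z₀] (fun z => z - (Real.exp (-(Complex.log z).re) : ℂ) * z
      + ((Complex.log z).im : ℂ) * (Complex.I * z)) := by
    filter_upwards [Complex.isOpen_slitPlane.mem_nhds hslit] with z hz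
    have hzne : z ≠ 0 := Complex.slitPlane_ne_zero hz
    have habs' : ‖z‖ ≠ 0 := by simpa using hzne
    rw [vField, Complex.log_re, Complex.log_im, ← Real.log_inv,
      Real.exp_log (by positivity)]
    push_cast
    ring
  -- derivative of log
  have hlog : HasFDerivAt Complex.log (z₀⁻¹ • (1 : ℂ →L[ℝ] ℂ)) z₀ :=
    (Complex.hasStrictFDerivAt_log_real hslit).hasFDerivAt
  have hre : HasFDerivAt (fun z => (Complex.log z).re)
      (Complex.reCLM.comp (z₀⁻¹ • (1 : ℂ →L[ℝ] ℂ))) z₀ :=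
    (Complex.reCLM.hasFDerivAt).comp z₀ hlog
  have him : HasFDerivAt (fun z => (Complex.log z).im)
      (Complex.imCLM.comp (z₀⁻¹ • (1 : ℂ →L[ℝ] ℂ))) z₀ :=
    (Complex.imCLM.hasFDerivAt).comp z₀ hlog
  have hexp : HasFDerivAt (fun z => Real.exp (-(Complex.log z).re))
      (Real.exp (-(Complex.log z₀).re) •
        (-(Complex.reCLM.comp (z₀⁻¹ • (1 : ℂ →L[ℝ] ℂ))))) z₀ :=
    (Real.hasDerivAt_exp _).comp_hasFDerivAt z₀ hre.neg
  have hA : HasFDerivAt (fun z => ((Real.exp (-(Complex.log z).re) : ℝ) : ℂ))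
      (Complex.ofRealCLM.comp (Real.exp (-(Complex.log z₀).re) •
        (-(Complex.reCLM.comp (z₀⁻¹ • (1 : ℂ →L[ℝ] ℂ)))))) z₀ :=
    (Complex.ofRealCLM.hasFDerivAt).comp z₀ hexp
  have hB : HasFDerivAt (fun z => (((Complex.log z).im : ℝ) : ℂ))
      (Complex.ofRealCLM.comp (Complex.imCLM.comp (z₀⁻¹ • (1 : ℂ →L[ℝ] ℂ)))) z₀ :=
    (Complex.ofRealCLM.hasFDerivAt).comp z₀ him
  have hid : HasFDerivAt (fun z : ℂ => z) (ContinuousLinearMap.id ℝ ℂ) z₀ := hasFDerivAt_id z₀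
  have hIz : HasFDerivAt (fun z : ℂ => Complex.I * z)
      (Complex.I • ContinuousLinearMap.id ℝ ℂ) z₀ := by
    simpa using hid.const_mul Complex.I
  have hg := (hid.sub (hA.mul hid)).add (hB.mul hIz)
  have hfd : fderiv ℝ vField z₀ = fderiv ℝ (fun z => z - (Real.exp (-(Complex.log z).re) : ℂ) * z
      + ((Complex.log z).im : ℂ) * (Complex.I * z)) z₀ := hev.fderiv_eq
  rw [hfd, (show HasFDerivAt (fun z => z - (Real.exp (-(Complex.log z).re) : ℂ) * z
      + ((Complex.log z).im : ℂ) * (Complex.I * z)) _ z₀ from hg).fderiv]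
  -- evaluate the linear map at ξ
  have hlogz : Complex.log z₀ = (Real.log ρ : ℂ) + (θ : ℂ) * Complex.I := by
    rw [Complex.log, habs, hargz]
  have hξ : ξ = ((ξN : ℂ) + (ξT : ℂ) * Complex.I) * e := by
    rw [he]
    apply Complex.ext <;>
      simp [hN, hT, Complex.exp_ofReal_mul_I_re, Complex.exp_ofReal_mul_I_im,
        Complex.add_re, Complex.add_im, Complex.mul_re, Complex.mul_im,
        Complex.cos_ofReal_re, Complex.sin_ofReal_re, Complex.cos_ofReal_im, Complex.sin_ofReal_im] <;>
      first
        | linear_combination (-ξ.re) * Real.sin_sq_add_cos_sq θ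
        | linear_combination (-ξ.im) * Real.sin_sq_add_cos_sq θ
  have hz0inv : z₀⁻¹ = (ρ⁻¹ : ℂ) * Complex.exp (-(θ * Complex.I)) := by
    rw [hz₀, he, mul_inv, ← Complex.exp_neg]
  have hmul : z₀⁻¹ * ξ = (ρ⁻¹ : ℂ) * ((ξN : ℂ) + (ξT : ℂ) * Complex.I) := by
    rw [hz0inv, hξ, he]
    rw [show ((ρ:ℝ)⁻¹ : ℂ) * Complex.exp (-(↑θ * Complex.I)) *
        (((ξN : ℂ) + (ξT : ℂ) * Complex.I) * Complex.exp (↑θ * Complex.I)) =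
        ((ρ:ℝ)⁻¹ : ℂ) * ((ξN : ℂ) + (ξT : ℂ) * Complex.I) *
          (Complex.exp (-(↑θ * Complex.I)) * Complex.exp (↑θ * Complex.I)) from by ring,
      ← Complex.exp_add]
    simp
  have hre_mul : (z₀⁻¹ * ξ).re = ξN / ρ := by
    rw [hmul, ← Complex.ofReal_inv, Complex.re_ofReal_mul]
    simp [inv_mul_eq_div]
  have him_mul : (z₀⁻¹ * ξ).im = ξT / ρ := by
    rw [hmul, ← Complex.ofReal_inv, Complex.im_ofReal_mul]
    simp [inv_mul_eq_div]
  have hexpre : Real.exp (-(Complex.log z₀).re) = ρ⁻¹ := by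
    rw [hlogz]
    simp [Real.exp_neg, Real.exp_log hρ]
  have himlog : (Complex.log z₀).im = θ := by
    rw [hlogz]; simp
  simp only [ContinuousLinearMap.add_apply, ContinuousLinearMap.sub_apply,
    ContinuousLinearMap.id_apply, ContinuousLinearMap.coe_comp', Function.comp_apply,
    ContinuousLinearMap.smul_apply, ContinuousLinearMap.neg_apply, ContinuousLinearMap.one_apply,
    Complex.ofRealCLM_apply, Complex.reCLM_apply, Complex.imCLM_apply, smul_eq_mul,
    ContinuousLinearMap.coe_smul', Pi.smul_apply]
  rw [hexpre, himlog]
  rw [hre_mul, him_mul, hξ, hz₀]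
  have hρc : (ρ : ℂ) ≠ 0 := by exact_mod_cast hρ.ne'
  push_cast
  field_simp
  ring_nf
  simp only [Complex.I_sq]
  ring
end
end
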